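/- arXiv:0906.4473 — 2 statements merged into one kernel-verified Lean document; each statement's English description precedes it below -/
import Mathlib

section
/- For all r, r' ≥ 0, θ' ∈ [-π/2, π/2], and z, z' ∈ ℝ with r² + r'² - 2rr'cosθ' + (z-z')² > 0, one has |(r² + r'² + 2rr'cosθ' + (z-z')²)^{-1/2} - (r² + r'² - 2rr'cosθ' + (z-z')²)^{-1/2}| ≤ 2r / (r² + r'² - 2rr'cosθ' + (z-z')²). -/
open Real

theorem stmt_7 (r r' θ' z z' : ℝ) (hr : 0 ≤ r) (hr' : 0 ≤ r')
    (hθ : θ' ∈ Set.Icc (-(π/2)) (π/2))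
    (hpos : 0 < r^2 + r'^2 - 2*r*r'*Real.cos θ' + (z - z')^2) :
    |1 / Real.sqrt (r^2 + r'^2 + 2*r*r'*Real.cos θ' + (z - z')^2)
      - 1 / Real.sqrt (r^2 + r'^2 - 2*r*r'*Real.cos θ' + (z - z')^2)|
      ≤ 2*r / (r^2 + r'^2 - 2*r*r'*Real.cos θ' + (z - z')^2) := by
  have hc : 0 ≤ Real.cos θ' := Real.cos_nonneg_of_mem_Icc hθ
  have hc1 : Real.cos θ' ≤ 1 := Real.cos_le_one θ'
  have hrc : 0 ≤ r * r' * Real.cos θ' := by positivity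
  set c := Real.cos θ' with hcdef
  have hB : (0:ℝ) < r^2 + r'^2 - 2*r*r'*c + (z - z')^2 := hpos
  have hA : (0:ℝ) < r^2 + r'^2 + 2*r*r'*c + (z - z')^2 := by linarith
  set A := r^2 + r'^2 + 2*r*r'*c + (z - z')^2 with hAdef
  set B := r^2 + r'^2 - 2*r*r'*c + (z - z')^2 with hBdef
  have hsB : 0 < Real.sqrt B := Real.sqrt_pos.2 hB
  have hsA : 0 < Real.sqrt A := Real.sqrt_pos.2 hA
  have hBA : B ≤ A := by linarith
  have hsBA : Real.sqrt B ≤ Real.sqrt A := Real.sqrt_le_sqrt hBA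
  have hA2 : Real.sqrt A ^ 2 = A := Real.sq_sqrt hA.le
  have hB2 : Real.sqrt B ^ 2 = B := Real.sq_sqrt hB.le
  have hdiff : A - B = 4*(r*r'*c) := by rw [hAdef, hBdef]; ring
  have hfac : Real.sqrt A ^ 2 - Real.sqrt B ^ 2 = 4*(r*r'*c) := by
    rw [hA2, hB2]; exact hdiff
  -- key bound : 2 r' c √B ≤ √A² + √B²
  have h2 : 2*(r'*c)*Real.sqrt B ≤ Real.sqrt A ^ 2 + Real.sqrt B ^ 2 := by
    have hcsq : (r'*c)^2 ≤ r'^2 := by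
      nlinarith [mul_nonneg (sq_nonneg r') (mul_nonneg (sub_nonneg.2 hc1) (by linarith : (0:ℝ) ≤ 1 + c))]
    have hr'A : r'^2 ≤ A := by
      rw [hAdef]; nlinarith [sq_nonneg (z - z'), sq_nonneg r]
    nlinarith [sq_nonneg (Real.sqrt B - r'*c), hB2, hA2]
  have hle : 1 / Real.sqrt A ≤ 1 / Real.sqrt B :=
    one_div_le_one_div_of_le hsB hsBA
  rw [abs_of_nonpos (by linarith), neg_sub]
  rw [div_sub_div _ _ hsB.ne' hsA.ne', div_le_div_iff₀ (by positivity) hB]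
  -- goal : (1 * √A - √B * 1) * B ≤ 2 * r * (√B * √A)
  have hsum : (0:ℝ) < Real.sqrt A + Real.sqrt B := by positivity
  have hfacB2 : (Real.sqrt A ^ 2 - Real.sqrt B ^ 2) * Real.sqrt B ^ 2
      = 4*(r*r'*c) * Real.sqrt B ^ 2 := by linear_combination Real.sqrt B ^ 2 * hfac
  have hint1 := mul_le_mul_of_nonneg_left h2 (mul_nonneg hr hsB.le)
  have hint2 : 0 ≤ r * (Real.sqrt B * Real.sqrt B) * (Real.sqrt A - Real.sqrt B) :=
    mul_nonneg (mul_nonneg hr (mul_nonneg hsB.le hsB.le)) (sub_nonneg.2 hsBA)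
  have final : (1 * Real.sqrt A - Real.sqrt B * 1) * Real.sqrt B ^ 2
      ≤ 2*r*(Real.sqrt B * Real.sqrt A) := by
    nlinarith [hsum, hfacB2, hint1, hint2, mul_pos hsB hsA, hsB, hsA]
  rwa [hB2] at final
end

section
/- For 1 < p < 2 and any f in W^{1,p}(ℝ), one has ‖f‖_{L^{p/(p−1),1}(ℝ)} ≤ C ‖f‖_{L^p(ℝ)}^{(2p−2)/p} · ‖f'‖_{L^p(ℝ)}^{(2−p)/p}. -/
open MeasureTheory ENNReal

/-- Decreasing rearrangement of `f` with respect to `μ`. -/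
noncomputable def rearr {α : Type*} [MeasurableSpace α] (μ : Measure α)
    (f : α → ℝ) (t : ℝ) : ℝ :=
  sInf {s : ℝ | 0 ≤ s ∧ μ {x | s < |f x|} ≤ ENNReal.ofReal t}

/-- Lorentz `L^{p,q}` quasinorm defined via the decreasing rearrangement. -/
noncomputable def lorentzNorm {α : Type*} [MeasurableSpace α] (μ : Measure α)
    (f : α → ℝ) (p q : ℝ≥0∞) : ℝ≥0∞ :=
  if q = ∞ then
    ⨆ t : Set.Ioi (0:ℝ), ENNReal.ofReal ((t : ℝ) ^ (1 / p.toReal) * rearr μ f t)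
  else
    (∫⁻ t in Set.Ioi (0:ℝ),
        (ENNReal.ofReal (t ^ (1 / p.toReal) * rearr μ f t)) ^ q.toReal
          / ENNReal.ofReal t) ^ (1 / q.toReal)

lemma measurable_rpow_const (c : ℝ) : Measurable fun x : ℝ => x ^ c :=
  measurable_of_measurable_on_compl_singleton 0 <|
    Continuous.measurable <| continuousOn_iff_continuous_restrict.1 <|
      fun x hx => (Real.continuousAt_rpow_const x c (Or.inl hx)).continuousWithinAt

section
variable {p : ℝ}

lemma rpow_sub2_mul_self (hp1 : p ≠ 1) (hp2 : p ≠ 2) {y : ℝ} (hy : 0 ≤ y) :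
    y ^ (p - 2) * y = y ^ (p - 1) := by
  rcases eq_or_lt_of_le hy with h | h
  · rw [← h, Real.zero_rpow (by intro hc; apply hp2; linarith), mul_zero,
      Real.zero_rpow (by intro hc; apply hp1; linarith)]
  · rw [show p - 1 = p - 2 + 1 by ring, Real.rpow_add_one h.ne']

lemma deriv_abs_rpow_comp (hp : 1 < p) {f : ℝ → ℝ} (hf : Differentiable ℝ f) (x : ℝ) :
    HasDerivAt (fun y => |f y| ^ p) ((p * |f x| ^ (p - 2) * f x) * deriv f x) x :=
  (hasDerivAt_abs_rpow (f x) hp).comp x (hf x).hasDerivAt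

lemma abs_deriv_bound (hp : 1 < p) (hp2 : p < 2) {f : ℝ → ℝ} (x : ℝ) :
    ‖(p * |f x| ^ (p - 2) * f x) * deriv f x‖ ≤ p * (|f x| ^ (p - 1) * |deriv f x|) := by
  have h0 : (0:ℝ) ≤ |f x| := abs_nonneg _
  rw [Real.norm_eq_abs, abs_mul, abs_mul, abs_mul]
  rw [abs_of_nonneg (le_of_lt (by linarith) : (0:ℝ) ≤ p),
    abs_of_nonneg (Real.rpow_nonneg h0 _)]
  have h1 : |f x| ^ (p-2) * |f x| = |f x| ^ (p-1) :=
    rpow_sub2_mul_self (by linarith) (by linarith) h0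
  refine le_of_eq ?_
  rw [mul_assoc p, h1]
  ring

lemma sup_bound (hp : 1 < p) (hp2 : p < 2) {f : ℝ → ℝ}
    (hf : Differentiable ℝ f)
    (hfi : Integrable (fun y => |f y| ^ p))
    (hG : Integrable (fun y => |f y| ^ (p - 1) * |deriv f y|)) (x : ℝ) :
    |f x| ^ p ≤ p * ∫ y, |f y| ^ (p - 1) * |deriv f y| := by
  set I := ∫ y, |f y| ^ (p - 1) * |deriv f y| with hI
  set ψ := fun y => (p * |f y| ^ (p - 2) * f y) * deriv f y with hψdef
  have hcont : Continuous f := hf.continuous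
  have hψm : AEStronglyMeasurable ψ volume := by
    refine (Measurable.mul ?_ (measurable_deriv f)).aestronglyMeasurable
    exact (measurable_const.mul ((measurable_rpow_const (p-2)).comp hcont.abs.measurable)).mul hcont.measurable
  have hψ : Integrable ψ volume := by
    refine (hG.const_mul p).mono' hψm ?_
    exact Filter.Eventually.of_forall fun y => abs_deriv_bound hp hp2 y
  have key : ∀ a, a ≤ x → |f x| ^ p ≤ |f a| ^ p + p * I := by
    intro a ha
    have hftc : ∫ y in a..x, ψ y = |f x| ^ p - |f a| ^ p :=
      intervalIntegral.integral_eq_sub_of_hasDerivAt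
        (fun y _ => deriv_abs_rpow_comp hp hf y) hψ.intervalIntegrable
    have h2 : ∫ y in a..x, ψ y ≤ p * I := by
      have h3 : ‖∫ y in a..x, ψ y‖ ≤ ∫ y in a..x, ‖ψ y‖ :=
        intervalIntegral.norm_integral_le_integral_norm ha
      have h4 : ∫ y in a..x, ‖ψ y‖ ≤ ∫ y, ‖ψ y‖ := by
        rw [intervalIntegral.integral_of_le ha]
        exact setIntegral_le_integral hψ.norm
          (Filter.Eventually.of_forall fun y => norm_nonneg _)
      have h5 : ∫ y, ‖ψ y‖ ≤ p * I := by
        rw [hI, ← integral_const_mul]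
        exact integral_mono hψ.norm (hG.const_mul p)
          (fun y => abs_deriv_bound hp hp2 y)
      calc ∫ y in a..x, ψ y ≤ ‖∫ y in a..x, ψ y‖ := le_abs_self _
        _ ≤ _ := le_trans h3 (le_trans h4 h5)
    linarith [hftc ▸ h2]
  refine le_of_forall_pos_le_add fun ε hε => ?_
  have hex : ∃ a ≤ x, |f a| ^ p < ε := by
    by_contra hcon
    push_neg at hcon
    have h6 : ∫⁻ a in Set.Iio x, ENNReal.ofReal ε
        ≤ ∫⁻ a in Set.Iio x, ENNReal.ofReal (|f a| ^ p) := by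
      refine setLIntegral_mono
        (ENNReal.measurable_ofReal.comp
          ((measurable_rpow_const p).comp hcont.abs.measurable)) ?_
      intro a ha
      exact ENNReal.ofReal_le_ofReal (hcon a (le_of_lt ha))
    rw [setLIntegral_const, Real.volume_Iio,
      ENNReal.mul_top (ENNReal.ofReal_pos.2 hε).ne'] at h6
    have h7 : ∫⁻ a in Set.Iio x, ENNReal.ofReal (|f a| ^ p) < ⊤ := by
      refine lt_of_le_of_lt (setLIntegral_le_lintegral _ _) ?_
      have h8 := hfi.hasFiniteIntegral
      rwa [hasFiniteIntegral_iff_ofReal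
        (Filter.Eventually.of_forall fun y => Real.rpow_nonneg (abs_nonneg _) _)] at h8
    exact absurd (lt_of_le_of_lt h6 h7) (lt_irrefl _)
  obtain ⟨a, ha, haε⟩ := hex
  have := key a ha
  linarith
end

lemma holder_G {p : ℝ} (hp : 1 < p) {f g : ℝ → ℝ}
    (hfm : AEMeasurable f volume) (hgm : AEMeasurable g volume) :
    ∫⁻ y, ENNReal.ofReal (|f y| ^ (p - 1) * |g y|)
      ≤ eLpNorm f (ENNReal.ofReal p) volume ^ (p - 1)
        * eLpNorm g (ENNReal.ofReal p) volume := by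
  have hp0 : (0:ℝ) < p := by linarith
  have hp1 : p - 1 ≠ 0 := by intro h; linarith [sub_eq_zero.1 h]
  have hP0 : ENNReal.ofReal p ≠ 0 := (ENNReal.ofReal_pos.2 hp0).ne'
  have hPt : ENNReal.ofReal p ≠ ⊤ := ofReal_ne_top
  have htr : (ENNReal.ofReal p).toReal = p := toReal_ofReal hp0.le
  have hpq : (p / (p - 1)).HolderConjugate p := (Real.HolderConjugate.conjExponent hp).symm
  have hrw : ∀ y : ℝ, ENNReal.ofReal (|f y| ^ (p - 1) * |g y|)
      = (ENNReal.ofReal |f y|) ^ (p - 1) * ENNReal.ofReal |g y| := by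
    intro y
    rw [ENNReal.ofReal_mul (Real.rpow_nonneg (abs_nonneg _) _),
      ENNReal.ofReal_rpow_of_nonneg (abs_nonneg _) (by linarith)]
  simp_rw [hrw]
  have hfa : AEMeasurable (fun y => |f y|) volume :=
    continuous_abs.measurable.comp_aemeasurable hfm
  have hga : AEMeasurable (fun y => |g y|) volume :=
    continuous_abs.measurable.comp_aemeasurable hgm
  have hmf : AEMeasurable (fun y => (ENNReal.ofReal |f y|) ^ (p - 1)) volume :=
    (hfa.ennreal_ofReal).pow_const _
  have hmg : AEMeasurable (fun y => ENNReal.ofReal |g y|) volume := hga.ennreal_ofReal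
  have hH := ENNReal.lintegral_mul_le_Lp_mul_Lq volume hpq hmf hmg
  refine le_trans hH (le_of_eq ?_)
  have e1 : ∀ y : ℝ, ((ENNReal.ofReal |f y|) ^ (p - 1)) ^ (p / (p - 1))
      = (ENNReal.ofReal |f y|) ^ p := by
    intro y
    rw [← ENNReal.rpow_mul]
    congr 1
    field_simp
  simp_rw [e1]
  have hcoe : ∀ (h : ℝ → ℝ) (y : ℝ), ENNReal.ofReal |h y| = ‖h y‖ₑ := by
    intro h y
    rw [← Real.norm_eq_abs, ofReal_norm]
  simp_rw [hcoe f, hcoe g]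
  rw [eLpNorm_eq_lintegral_rpow_enorm_toReal hP0 hPt, eLpNorm_eq_lintegral_rpow_enorm_toReal hP0 hPt, htr]
  have e2 : (1 : ℝ) / (p / (p - 1)) = (1 / p) * (p - 1) := by field_simp
  rw [e2, ENNReal.rpow_mul]

lemma rearr_nonneg {α : Type*} [MeasurableSpace α] (μ : Measure α) (f : α → ℝ) (t : ℝ) :
    0 ≤ rearr μ f t :=
  Real.sInf_nonneg (fun _ hs => hs.1)

lemma rearr_le {α : Type*} [MeasurableSpace α] {μ : Measure α} {f : α → ℝ} {t s : ℝ}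
    (hs : 0 ≤ s) (h : μ {x | s < |f x|} ≤ ENNReal.ofReal t) : rearr μ f t ≤ s :=
  csInf_le ⟨0, fun _ hr => hr.1⟩ ⟨hs, h⟩

lemma rearr_zero {α : Type*} [MeasurableSpace α] (μ : Measure α) {f : α → ℝ}
    (hf : ∀ x, f x = 0) (t : ℝ) : rearr μ f t = 0 := by
  refine le_antisymm (rearr_le le_rfl ?_) (rearr_nonneg μ f t)
  have : {x | (0:ℝ) < |f x|} = ∅ := by
    ext x; simp [hf x]
  rw [this, measure_empty]
  exact zero_le

lemma lorentzNorm_zero_fun {α : Type*} [MeasurableSpace α] (μ : Measure α) {f : α → ℝ}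
    (hf : ∀ x, f x = 0) (P : ℝ≥0∞) : lorentzNorm μ f P 1 = 0 := by
  rw [lorentzNorm, if_neg one_ne_top]
  have h0 : ∀ t : ℝ, ENNReal.ofReal (t ^ (1 / P.toReal) * rearr μ f t) = 0 := by
    intro t; rw [rearr_zero μ hf t, mul_zero, ENNReal.ofReal_zero]
  simp only [h0, ENNReal.toReal_one, ENNReal.rpow_one, ENNReal.zero_div, lintegral_zero,
    one_div_one, ENNReal.rpow_one]

lemma lintegral_min_bound {p M N : ℝ} (hp : 1 < p) (hp2 : p < 2) (hM : 0 < M) (hN : 0 < N) :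
    ∫⁻ t in Set.Ioi (0:ℝ),
        ENNReal.ofReal (t ^ ((p-1)/p - 1) * min M (N * t ^ (-1/p)))
      ≤ ENNReal.ofReal ((p/(p-1) + p/(2-p)) * (N ^ (p-1) * M ^ (2-p))) := by
  have hp0 : (0:ℝ) < p := by linarith
  have hp1 : (0:ℝ) < p - 1 := by linarith
  have h2p : (0:ℝ) < 2 - p := by linarith
  have hp2' : p - 2 ≠ 0 := by intro h; linarith [sub_eq_zero.1 h]
  have ha1 : (p-1)/p - 1 = -1/p := by field_simp; ring
  have hexp : -1 < -1/p := by
    rw [neg_div]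
    have : 1/p < 1 := by rw [div_lt_one hp0]; exact hp
    linarith
  have hexp2 : (-2)/p < -1 := by rw [div_lt_iff₀ hp0]; linarith
  simp_rw [ha1]
  set T : ℝ := (N/M) ^ p with hT
  have hT0 : 0 < T := Real.rpow_pos_of_pos (div_pos hN hM) p
  rw [← Set.Ioc_union_Ioi_eq_Ioi hT0.le,
    lintegral_union measurableSet_Ioi (Set.Ioc_disjoint_Ioi le_rfl)]
  have hmeas : Measurable fun t : ℝ => ENNReal.ofReal (t ^ (-1/p) * M) :=
    (((measurable_rpow_const (-1/p)).mul_const M)).ennreal_ofReal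
  -- Piece 1
  have hpiece1 : ∫⁻ t in Set.Ioc 0 T, ENNReal.ofReal (t ^ (-1/p) * min M (N * t ^ (-1/p)))
      ≤ ENNReal.ofReal (p/(p-1) * (M * T ^ ((p-1)/p))) := by
    have step1 : ∫⁻ t in Set.Ioc 0 T, ENNReal.ofReal (t ^ (-1/p) * min M (N * t ^ (-1/p)))
        ≤ ∫⁻ t in Set.Ioc 0 T, ENNReal.ofReal (t ^ (-1/p) * M) := by
      refine setLIntegral_mono hmeas fun t ht => ?_
      exact ENNReal.ofReal_le_ofReal
        (mul_le_mul_of_nonneg_left (min_le_left _ _) (Real.rpow_nonneg ht.1.le _))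
    refine le_trans step1 ?_
    have hint : IntegrableOn (fun t : ℝ => t ^ (-1/p) * M) (Set.Ioc 0 T) := by
      have h1 : IntervalIntegrable (fun t : ℝ => t ^ (-1/p)) volume 0 T :=
        intervalIntegral.intervalIntegrable_rpow' hexp
      rw [intervalIntegrable_iff_integrableOn_Ioc_of_le hT0.le] at h1
      exact h1.mul_const M
    rw [← ofReal_integral_eq_lintegral_ofReal hint
      ((ae_restrict_iff' measurableSet_Ioc).2 (Filter.Eventually.of_forall
        fun t ht => mul_nonneg (Real.rpow_nonneg ht.1.le _) hM.le))]
    refine ENNReal.ofReal_le_ofReal (le_of_eq ?_)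
    rw [← intervalIntegral.integral_of_le hT0.le, intervalIntegral.integral_mul_const,
      integral_rpow (Or.inl hexp)]
    rw [show -1/p + 1 = (p-1)/p by field_simp; ring, Real.zero_rpow (by positivity : (p-1)/p ≠ 0)]
    have key : ∀ X : ℝ, (X - 0)/((p-1)/p) * M = p/(p-1)*(M*X) := by
      intro X
      field_simp
      ring
    exact key _
  -- Piece 2
  have hmeas2 : Measurable fun t : ℝ => ENNReal.ofReal (N * t ^ ((-2)/p)) :=
    ((measurable_rpow_const ((-2)/p)).const_mul N).ennreal_ofReal
  have hpiece2 : ∫⁻ t in Set.Ioi T, ENNReal.ofReal (t ^ (-1/p) * min M (N * t ^ (-1/p)))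
      ≤ ENNReal.ofReal (p/(2-p) * (N * T ^ ((p-2)/p))) := by
    have step1 : ∫⁻ t in Set.Ioi T, ENNReal.ofReal (t ^ (-1/p) * min M (N * t ^ (-1/p)))
        ≤ ∫⁻ t in Set.Ioi T, ENNReal.ofReal (N * t ^ ((-2)/p)) := by
      refine setLIntegral_mono hmeas2 fun t ht => ?_
      have ht0 : (0:ℝ) < t := lt_trans hT0 ht
      refine ENNReal.ofReal_le_ofReal ?_
      have heq : t ^ (-1/p) * (N * t ^ (-1/p)) = N * t ^ ((-2)/p) := by
        rw [show (-2)/p = -1/p + -1/p by ring, Real.rpow_add ht0]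
        ring
      rw [← heq]
      exact mul_le_mul_of_nonneg_left (min_le_right _ _) (Real.rpow_nonneg ht0.le _)
    refine le_trans step1 ?_
    have hint : IntegrableOn (fun t : ℝ => N * t ^ ((-2)/p)) (Set.Ioi T) :=
      (integrableOn_Ioi_rpow_of_lt hexp2 hT0).const_mul N
    rw [← ofReal_integral_eq_lintegral_ofReal hint
      ((ae_restrict_iff' measurableSet_Ioi).2 (Filter.Eventually.of_forall
        fun t ht => mul_nonneg hN.le (Real.rpow_nonneg (lt_trans hT0 ht).le _)))]
    refine ENNReal.ofReal_le_ofReal (le_of_eq ?_)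
    rw [MeasureTheory.integral_const_mul, integral_Ioi_rpow_of_lt hexp2 hT0,
      show (-2)/p + 1 = (p-2)/p by field_simp; ring]
    have key : ∀ X : ℝ, N * (-X/((p-2)/p)) = p/(2-p)*(N*X) := by
      intro X
      field_simp
      ring
    exact key _
  refine le_trans (add_le_add hpiece1 hpiece2) ?_
  rw [← ENNReal.ofReal_add (by positivity) (by positivity)]
  refine ENNReal.ofReal_le_ofReal (le_of_eq ?_)
  have hNM : (0:ℝ) ≤ N / M := (div_pos hN hM).le
  have hTa : T ^ ((p-1)/p) = N ^ (p-1) * M ^ (-(p-1)) := by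
    rw [hT, ← Real.rpow_mul hNM, show p * ((p-1)/p) = p-1 by field_simp,
      Real.div_rpow hN.le hM.le, div_eq_mul_inv, ← Real.rpow_neg hM.le]
  have hTb : T ^ ((p-2)/p) = N ^ (p-2) * M ^ (-(p-2)) := by
    rw [hT, ← Real.rpow_mul hNM, show p * ((p-2)/p) = p-2 by field_simp,
      Real.div_rpow hN.le hM.le, div_eq_mul_inv, ← Real.rpow_neg hM.le]
  rw [hTa, hTb]
  have e1 : M * M ^ (-(p-1)) = M ^ (2-p) := by
    rw [show (2:ℝ)-p = 1 + -(p-1) by ring, Real.rpow_add hM, Real.rpow_one]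
  have e2 : M ^ (-(p-2)) = M ^ (2-p) := by rw [show -(p-2) = (2:ℝ)-p by ring]
  have e3 : N * N ^ (p-2) = N ^ (p-1) := by
    rw [show p-(1:ℝ) = 1 + (p-2) by ring, Real.rpow_add hN, Real.rpow_one]
  rw [e2]
  linear_combination (p/(p-1) * N^(p-1)) * e1 + (p/(2-p) * M^(2-p)) * e3

/-- Gagliardo–Nirenberg inequality with sharp Lorentz second index on `ℝ`. -/
theorem stmt_15 (p : ℝ) (hp : 1 < p) (hp2 : p < 2) :
    ∃ C : ℝ, 0 < C ∧ ∀ f : ℝ → ℝ,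
      Differentiable ℝ f →
      MemLp f (ENNReal.ofReal p) volume →
      MemLp (deriv f) (ENNReal.ofReal p) volume →
      lorentzNorm volume f (ENNReal.ofReal (p/(p-1))) 1
        ≤ ENNReal.ofReal C
          * (eLpNorm f (ENNReal.ofReal p) volume) ^ ((2*p - 2)/p)
          * (eLpNorm (deriv f) (ENNReal.ofReal p) volume) ^ ((2 - p)/p) := by
  have hp0 : (0:ℝ) < p := by linarith
  have hp1 : (0:ℝ) < p - 1 := by linarith
  have h2p : (0:ℝ) < 2 - p := by linarith
  refine ⟨(p/(p-1) + p/(2-p)) * p ^ ((2-p)/p), ?_, fun f hf hfp hf'p => ?_⟩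
  · have h3 := Real.rpow_pos_of_pos hp0 ((2-p)/p)
    have h1 : 0 < p/(p-1) := div_pos hp0 hp1
    have h2 : 0 < p/(2-p) := div_pos hp0 h2p
    exact mul_pos (by linarith) h3
  have hP0 : ENNReal.ofReal p ≠ 0 := (ENNReal.ofReal_pos.2 hp0).ne'
  have hPt : ENNReal.ofReal p ≠ ⊤ := ofReal_ne_top
  have htr : (ENNReal.ofReal p).toReal = p := toReal_ofReal hp0.le
  have hcont : Continuous f := hf.continuous
  set G := fun y : ℝ => |f y| ^ (p-1) * |deriv f y| with hGdef
  have hGnn : ∀ y, 0 ≤ G y :=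
    fun y => mul_nonneg (Real.rpow_nonneg (abs_nonneg _) _) (abs_nonneg _)
  have hGm : AEStronglyMeasurable G volume := by
    refine Measurable.aestronglyMeasurable ?_
    exact (((measurable_rpow_const (p-1)).comp hcont.abs.measurable).mul
      ((measurable_deriv f).abs))
  have hGlint := holder_G hp hcont.measurable.aemeasurable (measurable_deriv f).aemeasurable
  have hEfin : eLpNorm f (ENNReal.ofReal p) volume < ⊤ := hfp.2
  have hE'fin : eLpNorm (deriv f) (ENNReal.ofReal p) volume < ⊤ := hf'p.2
  have hGfin : ∫⁻ y, ENNReal.ofReal (G y) < ⊤ :=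
    lt_of_le_of_lt hGlint
      (ENNReal.mul_lt_top (ENNReal.rpow_lt_top_of_nonneg (by linarith) hEfin.ne) hE'fin)
  have hGint : Integrable G volume := by
    refine ⟨hGm, ?_⟩
    rw [hasFiniteIntegral_iff_ofReal (Filter.Eventually.of_forall hGnn)]
    exact hGfin
  have hfpInt : Integrable (fun y => |f y| ^ p) volume := by
    have h1 := hfp.integrable_norm_rpow hP0 hPt
    rw [htr] at h1
    simpa [Real.norm_eq_abs] using h1
  set I := ∫ y, G y with hIdef
  have hInn : 0 ≤ I := integral_nonneg hGnn
  have hIbd : ∀ x, |f x| ^ p ≤ p * I := sup_bound hp hp2 hf hfpInt hGint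
  rcases eq_or_lt_of_le hInn with hI0 | hIpos
  · -- zero function case
    have hfx : ∀ x, f x = 0 := by
      intro x
      have h1 := hIbd x
      rw [← hI0, mul_zero] at h1
      have h3 : (0:ℝ) ≤ |f x| ^ p := Real.rpow_nonneg (abs_nonneg _) _
      have h4 : |f x| ^ p = 0 := le_antisymm h1 h3
      have h5 : |f x| = 0 := by
        by_contra hc
        exact hc (by
          have := (Real.rpow_natCast (|f x|) 0)
          exact absurd h4 (ne_of_gt (Real.rpow_pos_of_pos
            (lt_of_le_of_ne (abs_nonneg _) (Ne.symm hc)) p)))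
      exact abs_eq_zero.1 h5
    rw [lorentzNorm_zero_fun volume hfx]
    exact zero_le
  · have hIlint : I = (∫⁻ y, ENNReal.ofReal (G y)).toReal := by
      rw [hIdef, integral_eq_lintegral_of_nonneg_ae (Filter.Eventually.of_forall hGnn) hGm]
    set N := (eLpNorm f (ENNReal.ofReal p) volume).toReal with hNdef
    set D := (eLpNorm (deriv f) (ENNReal.ofReal p) volume).toReal with hDdef
    have hNnn : 0 ≤ N := toReal_nonneg
    have hDnn : 0 ≤ D := toReal_nonneg
    have hEeq : eLpNorm f (ENNReal.ofReal p) volume = ENNReal.ofReal N := by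
      rw [hNdef, ofReal_toReal hEfin.ne]
    have hE'eq : eLpNorm (deriv f) (ENNReal.ofReal p) volume = ENNReal.ofReal D := by
      rw [hDdef, ofReal_toReal hE'fin.ne]
    have hIle : I ≤ N ^ (p-1) * D := by
      rw [hIlint]
      have h1 : (∫⁻ y, ENNReal.ofReal (G y)) ≤ ENNReal.ofReal (N ^ (p-1) * D) := by
        refine le_trans hGlint (le_of_eq ?_)
        rw [hEeq, hE'eq, ENNReal.ofReal_rpow_of_nonneg hNnn (by linarith),
          ← ENNReal.ofReal_mul (Real.rpow_nonneg hNnn _)]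
      refine le_trans (toReal_mono ofReal_ne_top h1) ?_
      rw [toReal_ofReal (mul_nonneg (Real.rpow_nonneg hNnn _) hDnn)]
    have hDpos : 0 < D := by
      rcases eq_or_lt_of_le hDnn with h | h
      · rw [← h, mul_zero] at hIle; linarith
      · exact h
    have hNpos : 0 < N := by
      rcases eq_or_lt_of_le hNnn with h | h
      · rw [← h, Real.zero_rpow hp1.ne', zero_mul] at hIle; linarith
      · exact h
    set M := (p * I) ^ (1/p) with hMdef
    have hpI : 0 < p * I := mul_pos hp0 hIpos
    have hMpos : 0 < M := Real.rpow_pos_of_pos hpI _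
    have hfbd : ∀ x, |f x| ≤ M := by
      intro x
      have h1 : (|f x| ^ p) ^ (1/p) ≤ (p*I) ^ (1/p) :=
        Real.rpow_le_rpow (Real.rpow_nonneg (abs_nonneg _) _) (hIbd x) (by positivity)
      rwa [← Real.rpow_mul (abs_nonneg _), mul_one_div_cancel hp0.ne', Real.rpow_one] at h1
    have hrle : ∀ t : ℝ, 0 < t → rearr volume f t ≤ min M (N * t ^ (-1/p)) := by
      intro t ht
      refine le_min (rearr_le hMpos.le ?_) (rearr_le ?_ ?_)
      · have he : {x : ℝ | M < |f x|} = ∅ := by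
          ext x; simp only [Set.mem_setOf_eq, Set.mem_empty_iff_false, iff_false, not_lt]
          exact hfbd x
        rw [he, measure_empty]
        exact zero_le
      · positivity
      · set s := N * t ^ (-1/p) with hsdef
        have hspos : 0 < s := mul_pos hNpos (Real.rpow_pos_of_pos ht _)
        have hsub : {x : ℝ | s < |f x|} ⊆ {x : ℝ | ENNReal.ofReal s ≤ ‖f x‖ₑ} := by
          intro x hx
          simp only [Set.mem_setOf_eq] at hx ⊢
          rw [← ofReal_norm, Real.norm_eq_abs]
          exact ENNReal.ofReal_le_ofReal hx.le
        refine le_trans (measure_mono hsub) ?_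
        refine le_trans (meas_ge_le_mul_pow_eLpNorm_enorm volume hP0 hPt hfp.1
          (ENNReal.ofReal_pos.2 hspos).ne' (fun h => absurd h ofReal_ne_top)) ?_
        rw [htr, hEeq]
        have hc1 : (ENNReal.ofReal s)⁻¹ ^ p * ENNReal.ofReal N ^ p
            = ENNReal.ofReal ((s⁻¹ * N) ^ p) := by
          rw [← ENNReal.ofReal_inv_of_pos hspos,
            ENNReal.ofReal_rpow_of_nonneg (inv_nonneg.2 hspos.le) hp0.le,
            ENNReal.ofReal_rpow_of_nonneg hNnn hp0.le,
            ← ENNReal.ofReal_mul (Real.rpow_nonneg (inv_nonneg.2 hspos.le) _),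
            ← Real.mul_rpow (inv_nonneg.2 hspos.le) hNnn]
        rw [hc1]
        refine le_of_eq ?_
        congr 1
        have hsN : s⁻¹ * N = t ^ (1/p) := by
          rw [hsdef, mul_inv, mul_comm, ← mul_assoc, mul_inv_cancel₀ hNpos.ne', one_mul,
            ← Real.rpow_neg ht.le, show -(-1/p) = 1/p by ring]
        rw [hsN, ← Real.rpow_mul ht.le, one_div_mul_cancel hp0.ne', Real.rpow_one]
    -- lorentz norm simplification
    have hLor : lorentzNorm volume f (ENNReal.ofReal (p/(p-1))) 1
        = ∫⁻ t in Set.Ioi (0:ℝ),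
            ENNReal.ofReal (t ^ ((p-1)/p) * rearr volume f t) / ENNReal.ofReal t := by
      rw [lorentzNorm, if_neg one_ne_top]
      rw [toReal_ofReal (by positivity : (0:ℝ) ≤ p/(p-1)), one_div_div]
      simp only [ENNReal.toReal_one, ENNReal.rpow_one, one_div_one]
    rw [hLor]
    have hmeasF : Measurable fun t : ℝ =>
        ENNReal.ofReal (t ^ ((p-1)/p - 1) * min M (N * t ^ (-1/p))) := by
      refine Measurable.ennreal_ofReal ?_
      exact (measurable_rpow_const ((p-1)/p - 1)).mul
        (measurable_const.min ((measurable_rpow_const (-1/p)).const_mul N))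
    have hbound : ∫⁻ t in Set.Ioi (0:ℝ),
          ENNReal.ofReal (t ^ ((p-1)/p) * rearr volume f t) / ENNReal.ofReal t
        ≤ ∫⁻ t in Set.Ioi (0:ℝ),
          ENNReal.ofReal (t ^ ((p-1)/p - 1) * min M (N * t ^ (-1/p))) := by
      refine setLIntegral_mono hmeasF fun t ht => ?_
      have ht0 : (0:ℝ) < t := ht
      rw [← ENNReal.ofReal_div_of_pos ht0]
      refine ENNReal.ofReal_le_ofReal ?_
      have he : t ^ ((p-1)/p) * rearr volume f t / t
          = t ^ ((p-1)/p - 1) * rearr volume f t := by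
        rw [Real.rpow_sub ht0, Real.rpow_one]; ring
      rw [he]
      exact mul_le_mul_of_nonneg_left (hrle t ht0) (Real.rpow_nonneg ht0.le _)
    refine le_trans (le_trans hbound (lintegral_min_bound hp hp2 hMpos hNpos)) ?_
    -- final comparison
    have hMbd : M ^ (2-p) ≤ (p * (N ^ (p-1) * D)) ^ ((2-p)/p) := by
      have h1 : M ≤ (p * (N ^ (p-1) * D)) ^ (1/p) := by
        rw [hMdef]
        exact Real.rpow_le_rpow hpI.le (mul_le_mul_of_nonneg_left hIle hp0.le) (by positivity)
      have h2 : M ^ (2-p) ≤ ((p * (N ^ (p-1) * D)) ^ (1/p)) ^ (2-p) :=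
        Real.rpow_le_rpow hMpos.le h1 h2p.le
      refine le_trans h2 (le_of_eq ?_)
      rw [← Real.rpow_mul (by positivity), show (1/p) * (2-p) = (2-p)/p by ring]
    have hfinal : (p/(p-1) + p/(2-p)) * (N ^ (p-1) * M ^ (2-p))
        ≤ ((p/(p-1) + p/(2-p)) * p ^ ((2-p)/p)) * (N ^ ((2*p-2)/p) * D ^ ((2-p)/p)) := by
      have hK : (0:ℝ) < p/(p-1) + p/(2-p) := by
        have h1 : 0 < p/(p-1) := div_pos hp0 hp1
        have h2 : 0 < p/(2-p) := div_pos hp0 h2p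
        linarith
      have hexpand : (p * (N ^ (p-1) * D)) ^ ((2-p)/p)
          = p ^ ((2-p)/p) * (N ^ ((p-1)*((2-p)/p)) * D ^ ((2-p)/p)) := by
        rw [Real.mul_rpow hp0.le (mul_nonneg (Real.rpow_nonneg hNnn _) hDnn),
          Real.mul_rpow (Real.rpow_nonneg hNnn _) hDnn, ← Real.rpow_mul hNnn]
      have hcollapse : N ^ (p-1) * N ^ ((p-1)*((2-p)/p)) = N ^ ((2*p-2)/p) := by
        rw [← Real.rpow_add hNpos]
        congr 1
        field_simp
        ring
      calc (p/(p-1) + p/(2-p)) * (N ^ (p-1) * M ^ (2-p))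
          ≤ (p/(p-1) + p/(2-p)) * (N ^ (p-1) * (p * (N ^ (p-1) * D)) ^ ((2-p)/p)) := by
            exact mul_le_mul_of_nonneg_left
              (mul_le_mul_of_nonneg_left hMbd (Real.rpow_nonneg hNnn _)) hK.le
        _ = ((p/(p-1) + p/(2-p)) * p ^ ((2-p)/p)) * (N ^ ((2*p-2)/p) * D ^ ((2-p)/p)) := by
            rw [hexpand, ← hcollapse]
            ring
    rw [hEeq, hE'eq, ENNReal.ofReal_rpow_of_nonneg hNnn (div_nonneg (by linarith) hp0.le),
      ENNReal.ofReal_rpow_of_nonneg hDnn (div_nonneg h2p.le hp0.le)]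
    have hCnn : (0:ℝ) ≤ (p/(p-1) + p/(2-p)) * p ^ ((2-p)/p) :=
      le_of_lt (mul_pos (add_pos (div_pos hp0 hp1) (div_pos hp0 h2p))
        (Real.rpow_pos_of_pos hp0 _))
    rw [← ENNReal.ofReal_mul hCnn, ← ENNReal.ofReal_mul (mul_nonneg hCnn (Real.rpow_nonneg hNnn _))]
    refine ENNReal.ofReal_le_ofReal ?_
    calc (p/(p-1) + p/(2-p)) * (N ^ (p-1) * M ^ (2-p))
        ≤ ((p/(p-1) + p/(2-p)) * p ^ ((2-p)/p)) * (N ^ ((2*p-2)/p) * D ^ ((2-p)/p)) := hfinal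
      _ = (p/(p-1) + p/(2-p)) * p ^ ((2-p)/p) * N ^ ((2*p-2)/p) * D ^ ((2-p)/p) := by ring
end
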